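/- Let R be a Noetherian commutative ring and (M_k)_{k∈ℕ} an increasing chain of R-modules (M_k a submodule of M_{k+1}) such that for every ideal I of R, every R-linear map I → M_k extends to an R-linear map R → M_{k+1}. Then the union (direct limit) M_ω = ⋃_k M_k is an injective R-module. -/

import Mathlib

theorem union_of_chain_injective
    (R : Type*) [CommRing R] [IsNoetherianRing R]
    (M : Type*) [AddCommGroup M] [Module R M]
    (N : ℕ → Submodule R M) (hmono : ∀ k, N k ≤ N (k + 1))
    (hext : ∀ (k : ℕ) (I : Ideal R) (f : I →ₗ[R] M), LinearMap.range f ≤ N k →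
      ∃ g : R →ₗ[R] M, LinearMap.range g ≤ N (k + 1) ∧ ∀ x : I, g (x : R) = f x) :
    Module.Injective R (⨆ k, N k : Submodule R M) := by
  classical
  have hN : Monotone N := monotone_nat_of_le_succ hmono
  apply Module.Baer.injective
  intro I f0
  let f' : I →ₗ[R] M := (⨆ k, N k : Submodule R M).subtype ∘ₗ f0
  -- range f' is finitely generated
  have hIfg : (I : Submodule R R).FG := IsNoetherian.noetherian I
  have hfg : (LinearMap.range f').FG := by
    rw [LinearMap.range_eq_map]
    exact (Submodule.fg_top _ |>.mpr hIfg).map f'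
  have hle : LinearMap.range f' ≤ ⨆ k, N k := by
    rintro _ ⟨x, rfl⟩
    exact (f0 x).2
  obtain ⟨s, hs⟩ := CompleteLattice.IsCompactElement.exists_finset_of_le_iSup _ ((Submodule.fg_iff_compact _).mp hfg) N hle
  have hk : LinearMap.range f' ≤ N (s.sup id) := by
    refine hs.trans ?_
    exact iSup_le fun i => iSup_le fun hi => hN (Finset.le_sup (f := id) hi)
  obtain ⟨g, hg, hgx⟩ := hext (s.sup id) I f' hk
  have hgS : ∀ x : R, g x ∈ (⨆ k, N k : Submodule R M) := fun x =>
    (hg.trans (le_iSup N (s.sup id + 1))) ⟨x, rfl⟩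
  refine ⟨LinearMap.codRestrict (⨆ k, N k : Submodule R M) g hgS, fun x hx => ?_⟩
  refine Subtype.ext ?_
  simpa [f'] using hgx ⟨x, hx⟩
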